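/- For the cooperative TIAN scheme with two rounds, the minimization over f ∈ [r₁,1] in (eq. for d₁,TIAN^c(2)) yields: if r₁ ≥ β the value is [1 - (r₁+β)/2]⁺; if r₁ ≤ β/2 and β ≥ 1 the value is 2[1-r₁]⁺; if r₁ ≤ β/2 and β < 1 the value is [1-r₁]⁺ + [β-r₁]⁺; if β/2 < r₁ < β and r₁ > 1/2 the value is (1-r₁)β/r₁; and if β/2 < r₁ < β and r₁ ≤ 1/2 the value is [1-r₁]⁺ + [β-r₁]⁺. -/

import Mathlib

noncomputable def pos (x : ℝ) : ℝ := max x 0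

noncomputable def phi12 (r₁ β : ℝ) (f : ℝ) : ℝ :=
  if β ≤ r₁ then pos (1 - (r₁ + β) / 2) + 1 - r₁ / f
  else if (1 - f) * β ≤ r₁ then
    min (pos (1 - r₁) + pos (β - r₁)) (pos (1 - (r₁ - (1 - f) * β) / f)) + 1 - r₁ / f
  else
    min (pos (1 - r₁) + pos (β - r₁)) (pos (1 + β - r₁ / (1 - f))) + 1 - r₁ / f

private lemma lb_A (r₁ β f : ℝ) (hr : 0 < r₁) (hβ : r₁ < β) (hhalf : r₁ ≤ 1/2)
    (hβ1 : β ≤ 1) (hf1 : r₁ ≤ f) (hf2 : f ≤ 1) :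
    1 + β - 2*r₁ ≤ phi12 r₁ β f := by
  have hf0 : 0 < f := hr.trans_le hf1
  have hβ0 : 0 < β := hr.trans hβ
  have hposA : pos (1-r₁) = 1 - r₁ := max_eq_left (by linarith)
  have hposB : pos (β-r₁) = β - r₁ := max_eq_left (by linarith)
  have hdiv1 : r₁ / f ≤ 1 := (div_le_one hf0).2 hf1
  rw [phi12, if_neg (not_le.2 hβ)]
  split_ifs with hreg
  · have hnum : r₁ - (1-f)*β ≤ f := by nlinarith [mul_nonneg (by linarith : (0:ℝ) ≤ 1 - f) hβ0.le]
    have hposC : pos (1 - (r₁-(1-f)*β)/f) = 1 - (r₁-(1-f)*β)/f :=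
      max_eq_left (by linarith [(div_le_one hf0).2 hnum])
    rw [hposA, hposB, hposC]
    rcases min_cases (1-r₁ + (β-r₁)) (1 - (r₁-(1-f)*β)/f) with ⟨hm,_⟩|⟨hm,_⟩ <;> rw [hm]
    · linarith
    · have heq : 1 - (r₁-(1-f)*β)/f + 1 - r₁/f = (2*f - (r₁-(1-f)*β) - r₁)/f := by
        field_simp; ring
      rw [heq, le_div_iff₀ hf0]
      nlinarith [mul_nonneg (mul_nonneg (by linarith : (0:ℝ) ≤ 1-f) (by linarith : (0:ℝ) ≤ 1-2*r₁)) (by linarith : (0:ℝ) ≤ β - r₁),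
        mul_nonneg (by linarith : (0:ℝ) ≤ f - r₁) (by linarith : (0:ℝ) ≤ 1 - β), hr]
  · push_neg at hreg
    have h1f : 0 < 1 - f := by nlinarith
    have hfr : r₁ ≤ 1 - f := by nlinarith [mul_nonneg h1f.le (by linarith : (0:ℝ) ≤ 1 - β)]
    have hdiv2 : r₁/(1-f) < β := (div_lt_iff₀ h1f).2 (by linarith)
    have hposC : pos (1 + β - r₁/(1-f)) = 1 + β - r₁/(1-f) := max_eq_left (by linarith)
    rw [hposA, hposB, hposC]
    rcases min_cases (1-r₁ + (β-r₁)) (1 + β - r₁/(1-f)) with ⟨hm,_⟩|⟨hm,_⟩ <;> rw [hm]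
    · linarith
    · have heq : 1 + β - r₁/(1-f) + 1 - r₁/f
          = ((2+β)*(f*(1-f)) - r₁*f - r₁*(1-f))/(f*(1-f)) := by
        field_simp; ring
      rw [heq, le_div_iff₀ (mul_pos hf0 h1f)]
      nlinarith [mul_nonneg (by linarith : (0:ℝ) ≤ f - r₁) (by linarith : (0:ℝ) ≤ 1 - f - r₁),
        mul_nonneg (mul_nonneg hr.le hr.le) (by linarith : (0:ℝ) ≤ 1 - 2*r₁), hr]

private lemma lb_B (r₁ β f : ℝ) (hr : 0 < r₁) (hr1 : r₁ ≤ 1) (hβ : r₁ < β) (h2r : 2*r₁ ≤ β)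
    (hβ1 : 1 ≤ β) (hf1 : r₁ ≤ f) (hf2 : f ≤ 1) :
    2 - 2*r₁ ≤ phi12 r₁ β f := by
  have hf0 : 0 < f := hr.trans_le hf1
  have hβ0 : 0 < β := hr.trans hβ
  have hposA : pos (1-r₁) = 1 - r₁ := max_eq_left (by linarith)
  have hposB : pos (β-r₁) = β - r₁ := max_eq_left (by linarith)
  have hdiv1 : r₁ / f ≤ 1 := (div_le_one hf0).2 hf1
  rw [phi12, if_neg (not_le.2 hβ)]
  split_ifs with hreg
  · have hnum : r₁ - (1-f)*β ≤ f := by nlinarith [mul_nonneg (by linarith : (0:ℝ) ≤ 1 - f) hβ0.le]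
    have hposC : pos (1 - (r₁-(1-f)*β)/f) = 1 - (r₁-(1-f)*β)/f :=
      max_eq_left (by linarith [(div_le_one hf0).2 hnum])
    rw [hposA, hposB, hposC]
    rcases min_cases (1-r₁ + (β-r₁)) (1 - (r₁-(1-f)*β)/f) with ⟨hm,_⟩|⟨hm,_⟩ <;> rw [hm]
    · linarith
    · have heq : 1 - (r₁-(1-f)*β)/f + 1 - r₁/f = (2*f - (r₁-(1-f)*β) - r₁)/f := by
        field_simp; ring
      rw [heq, le_div_iff₀ hf0]
      nlinarith [mul_nonneg (by linarith : (0:ℝ) ≤ 1-f) (by linarith : (0:ℝ) ≤ β - 2*r₁)]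
  · push_neg at hreg
    have h1f : 0 < 1 - f := by nlinarith
    have hdiv2 : r₁/(1-f) < β := (div_lt_iff₀ h1f).2 (by linarith)
    have hposC : pos (1 + β - r₁/(1-f)) = 1 + β - r₁/(1-f) := max_eq_left (by linarith)
    rw [hposA, hposB, hposC]
    rcases min_cases (1-r₁ + (β-r₁)) (1 + β - r₁/(1-f)) with ⟨hm,_⟩|⟨hm,_⟩ <;> rw [hm]
    · linarith
    · have heq : 1 + β - r₁/(1-f) + 1 - r₁/f
          = ((2+β)*(f*(1-f)) - r₁*f - r₁*(1-f))/(f*(1-f)) := by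
        field_simp; ring
      rw [heq, le_div_iff₀ (mul_pos hf0 h1f)]
      have hs : 0 ≤ β*(1-f) - r₁ := by nlinarith
      have h1 : 0 ≤ β*(β+2*r₁)*((f-r₁)*(β*(1-f)-r₁)) :=
        mul_nonneg (mul_nonneg hβ0.le (by linarith)) (mul_nonneg (by linarith) hs)
      have h2 : 0 ≤ (β+2*r₁)*r₁*(β-1)*(β*(1-f)-r₁) :=
        mul_nonneg (mul_nonneg (mul_nonneg (by linarith) hr.le) (by linarith)) hs
      have h3 : 0 ≤ r₁*r₁*(β-2*r₁) := mul_nonneg (mul_nonneg hr.le hr.le) (by linarith)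
      nlinarith [h1, h2, h3, mul_pos hβ0 hβ0, sq_nonneg β]

private lemma lb_C (r₁ β f : ℝ) (hr : 0 < r₁) (hr1 : r₁ ≤ 1) (hβ : r₁ < β) (h2r : β < 2*r₁)
    (hhalf : 1/2 < r₁) (hf1 : r₁ ≤ f) (hf2 : f ≤ 1) :
    (1 - r₁)*β/r₁ ≤ phi12 r₁ β f := by
  have hf0 : 0 < f := hr.trans_le hf1
  have hβ0 : 0 < β := hr.trans hβ
  have hposA : pos (1-r₁) = 1 - r₁ := max_eq_left (by linarith)
  have hposB : pos (β-r₁) = β - r₁ := max_eq_left (by linarith)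
  have hdiv1 : r₁ / f ≤ 1 := (div_le_one hf0).2 hf1
  have hVA : (1 - r₁)*β/r₁ ≤ 1 - r₁ + (β - r₁) := by
    rw [div_le_iff₀ hr]
    nlinarith [mul_nonneg (by linarith : (0:ℝ) ≤ 2*r₁-1) (by linarith : (0:ℝ) ≤ β - r₁)]
  have hreg : (1 - f) * β ≤ r₁ := by
    nlinarith [mul_nonneg (by linarith : (0:ℝ) ≤ 1-f) (by linarith : (0:ℝ) ≤ 2*r₁ - β)]
  rw [phi12, if_neg (not_le.2 hβ), if_pos hreg]
  have hnum : r₁ - (1-f)*β ≤ f := by nlinarith [mul_nonneg (by linarith : (0:ℝ) ≤ 1 - f) hβ0.le]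
  have hposC : pos (1 - (r₁-(1-f)*β)/f) = 1 - (r₁-(1-f)*β)/f :=
    max_eq_left (by linarith [(div_le_one hf0).2 hnum])
  rw [hposA, hposB, hposC]
  rcases min_cases (1-r₁ + (β-r₁)) (1 - (r₁-(1-f)*β)/f) with ⟨hm,_⟩|⟨hm,_⟩ <;> rw [hm]
  · linarith
  · have heq : 1 - (r₁-(1-f)*β)/f + 1 - r₁/f = (2*f - (r₁-(1-f)*β) - r₁)/f := by
      field_simp; ring
    rw [heq, div_le_div_iff₀ hr hf0]
    nlinarith [mul_nonneg (by linarith : (0:ℝ) ≤ 2*r₁ - β) (by linarith : (0:ℝ) ≤ f - r₁)]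

theorem stmt12 (r₁ β : ℝ) (hr : 0 < r₁) (hr1 : r₁ ≤ 1) (hβ : 0 < β) :
    sInf (phi12 r₁ β '' Set.Icc r₁ 1) =
      if β ≤ r₁ then pos (1 - (r₁ + β) / 2)
      else if r₁ ≤ β / 2 then
        (if 1 ≤ β then 2 * pos (1 - r₁) else pos (1 - r₁) + pos (β - r₁))
      else if 1 / 2 < r₁ then (1 - r₁) * β / r₁
      else pos (1 - r₁) + pos (β - r₁) := by
  have hmem_r : r₁ ∈ Set.Icc r₁ (1:ℝ) := ⟨le_refl _, hr1⟩
  have hmem_1 : (1:ℝ) ∈ Set.Icc r₁ (1:ℝ) := ⟨hr1, le_refl _⟩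
  have hself : r₁ / r₁ = 1 := div_self hr.ne'
  by_cases h1 : β ≤ r₁
  · rw [if_pos h1]
    apply IsLeast.csInf_eq
    constructor
    · refine ⟨r₁, hmem_r, ?_⟩
      rw [phi12, if_pos h1, hself]; ring
    · rintro y ⟨f, ⟨hf1, hf2⟩, rfl⟩
      have hf0 : 0 < f := hr.trans_le hf1
      have hdiv1 : r₁ / f ≤ 1 := (div_le_one hf0).2 hf1
      rw [phi12, if_pos h1]
      linarith
  · rw [if_neg h1]
    push_neg at h1
    have hposA : pos (1-r₁) = 1 - r₁ := max_eq_left (by linarith)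
    have hposB : pos (β-r₁) = β - r₁ := max_eq_left (by linarith)
    by_cases h2 : r₁ ≤ β / 2
    · rw [if_pos h2]
      by_cases h3 : (1:ℝ) ≤ β
      · rw [if_pos h3]
        apply IsLeast.csInf_eq
        constructor
        · refine ⟨1, hmem_1, ?_⟩
          rw [phi12, if_neg (not_le.2 h1), if_pos (by linarith : (1-(1:ℝ))*β ≤ r₁)]
          have e1 : (1:ℝ) - (r₁ - (1 - 1)*β)/1 = 1 - r₁ := by ring_nf
          rw [e1, hposA]
          have hpnn : (0:ℝ) ≤ pos (β - r₁) := by rw [pos]; exact le_max_right _ _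
          have e2 : min (1 - r₁ + pos (β - r₁)) (1 - r₁) = 1 - r₁ :=
            min_eq_right (by linarith)
          rw [e2]
          ring
        · rintro y ⟨f, ⟨hf1, hf2⟩, rfl⟩
          have := lb_B r₁ β f hr hr1 h1 (by linarith) h3 hf1 hf2
          rw [hposA]; linarith
      · rw [if_neg h3]
        push_neg at h3
        apply IsLeast.csInf_eq
        constructor
        · refine ⟨r₁, hmem_r, ?_⟩
          rw [phi12, if_neg (not_le.2 h1), hself, hposA, hposB]
          have hA : (0:ℝ) ≤ 1 - r₁ + (β - r₁) := by linarith
          split_ifs with hreg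
          · have h1r : 0 < 1 - r₁ := by nlinarith
            have e1 : (1:ℝ) - (r₁ - (1 - r₁)*β)/r₁ = (1-r₁)*β/r₁ := by
              field_simp; ring
            have hmin : min (1 - r₁ + (β - r₁)) (pos (1 - (r₁ - (1 - r₁)*β)/r₁))
                = 1 - r₁ + (β - r₁) := by
              apply min_eq_left
              rw [e1]
              have : 1 - r₁ + (β - r₁) ≤ (1-r₁)*β/r₁ := by
                rw [le_div_iff₀ hr]
                nlinarith [mul_nonneg (by linarith : (0:ℝ) ≤ 1 - 2*r₁) (by linarith : (0:ℝ) ≤ β - r₁)]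
              exact this.trans (le_max_left _ _)
            rw [hmin]; ring
          · push_neg at hreg
            have h1r : 0 < 1 - r₁ := by nlinarith
            have hmin : min (1 - r₁ + (β - r₁)) (pos (1 + β - r₁/(1-r₁)))
                = 1 - r₁ + (β - r₁) := by
              apply min_eq_left
              have : 1 - r₁ + (β - r₁) ≤ 1 + β - r₁/(1-r₁) := by
                have : r₁/(1-r₁) ≤ 2*r₁ := by
                  rw [div_le_iff₀ h1r]; nlinarith
                linarith
              exact this.trans (le_max_left _ _)
            rw [hmin]; ring
        · rintro y ⟨f, ⟨hf1, hf2⟩, rfl⟩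
          have := lb_A r₁ β f hr h1 (by linarith) h3.le hf1 hf2
          rw [hposA, hposB]; linarith
    · rw [if_neg h2]
      push_neg at h2
      by_cases h4 : 1/2 < r₁
      · rw [if_pos h4]
        apply IsLeast.csInf_eq
        constructor
        · refine ⟨r₁, hmem_r, ?_⟩
          have hreg : (1 - r₁) * β ≤ r₁ := by
            nlinarith [mul_nonneg (by linarith : (0:ℝ) ≤ 1-r₁) (by linarith : (0:ℝ) ≤ 2*r₁ - β)]
          rw [phi12, if_neg (not_le.2 h1), if_pos hreg, hself, hposA, hposB]
          have e1 : (1:ℝ) - (r₁ - (1 - r₁)*β)/r₁ = (1-r₁)*β/r₁ := by field_simp; ring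
          have hVnn : (0:ℝ) ≤ (1-r₁)*β/r₁ :=
            div_nonneg (mul_nonneg (by linarith) hβ.le) hr.le
          have hposC : pos (1 - (r₁ - (1 - r₁)*β)/r₁) = (1-r₁)*β/r₁ := by
            rw [e1]; exact max_eq_left hVnn
          have hmin : min (1 - r₁ + (β - r₁)) ((1-r₁)*β/r₁) = (1-r₁)*β/r₁ := by
            apply min_eq_right
            rw [div_le_iff₀ hr]
            nlinarith [mul_nonneg (by linarith : (0:ℝ) ≤ 2*r₁-1) (by linarith : (0:ℝ) ≤ β - r₁)]
          rw [hposC, hmin]; ring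
        · rintro y ⟨f, ⟨hf1, hf2⟩, rfl⟩
          exact lb_C r₁ β f hr hr1 h1 (by linarith) h4 hf1 hf2
      · rw [if_neg h4]
        push_neg at h4
        have hβ1 : β ≤ 1 := by linarith
        apply IsLeast.csInf_eq
        constructor
        · refine ⟨r₁, hmem_r, ?_⟩
          rw [phi12, if_neg (not_le.2 h1), hself, hposA, hposB]
          split_ifs with hreg
          · have e1 : (1:ℝ) - (r₁ - (1 - r₁)*β)/r₁ = (1-r₁)*β/r₁ := by field_simp; ring
            have hmin : min (1 - r₁ + (β - r₁)) (pos (1 - (r₁ - (1 - r₁)*β)/r₁))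
                = 1 - r₁ + (β - r₁) := by
              apply min_eq_left
              rw [e1]
              have : 1 - r₁ + (β - r₁) ≤ (1-r₁)*β/r₁ := by
                rw [le_div_iff₀ hr]
                nlinarith [mul_nonneg (by linarith : (0:ℝ) ≤ 1 - 2*r₁) (by linarith : (0:ℝ) ≤ β - r₁)]
              exact this.trans (le_max_left _ _)
            rw [hmin]; ring
          · push_neg at hreg
            have h1r : 0 < 1 - r₁ := by nlinarith
            have hmin : min (1 - r₁ + (β - r₁)) (pos (1 + β - r₁/(1-r₁)))
                = 1 - r₁ + (β - r₁) := by
              apply min_eq_left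
              have : 1 - r₁ + (β - r₁) ≤ 1 + β - r₁/(1-r₁) := by
                have : r₁/(1-r₁) ≤ 2*r₁ := by
                  rw [div_le_iff₀ h1r]; nlinarith
                linarith
              exact this.trans (le_max_left _ _)
            rw [hmin]; ring
        · rintro y ⟨f, ⟨hf1, hf2⟩, rfl⟩
          have := lb_A r₁ β f hr h1 h4 hβ1 hf1 hf2
          rw [hposA, hposB]; linarith
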